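/- Let A and B be 2×2 complex matrices and define X_D = [[A₁₁, -B₁₁],[A₂₁, -B₂₁]] and X_N = [[A₁₂, B₁₂],[A₂₂, B₂₂]] (subscripts denote (row, column) entries). Then the pair (A,B) satisfies condition (*) (i.e., the 2×4 concatenation (A B) has rank 2 and A J A* = B J B* with J = [[0,-1],[1,0]]) if and only if the pair (X_D, X_N) is admissible (i.e., the 2×4 concatenation (X_D X_N) has rank 2 and X_D X_N* = X_N X_D*). -/

import Mathlib

open Matrix

/-- The matrix `J = [[0,-1],[1,0]]`. -/
def Jmat : Matrix (Fin 2) (Fin 2) ℂ := !![0, -1; 1, 0]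

/-- The matrix `X_D` built from `A` and `B`. -/
def XD (A B : Matrix (Fin 2) (Fin 2) ℂ) : Matrix (Fin 2) (Fin 2) ℂ :=
  !![A 0 0, -B 0 0; A 1 0, -B 1 0]

/-- The matrix `X_N` built from `A` and `B`. -/
def XN (A B : Matrix (Fin 2) (Fin 2) ℂ) : Matrix (Fin 2) (Fin 2) ℂ :=
  !![A 0 1, B 0 1; A 1 1, B 1 1]

/-- Column permutation / sign matrix. -/
def Pmat : Matrix (Fin 2 ⊕ Fin 2) (Fin 2 ⊕ Fin 2) ℂ :=
  Matrix.fromBlocks !![1,0;0,0] !![0,0;1,0] !![0,-1;0,0] !![0,0;0,1]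

def Pinv : Matrix (Fin 2 ⊕ Fin 2) (Fin 2 ⊕ Fin 2) ℂ :=
  Matrix.fromBlocks !![1,0;0,0] !![0,0;-1,0] !![0,1;0,0] !![0,0;0,1]

lemma Pmat_mul_Pinv : Pmat * Pinv = 1 := by
  ext i j
  rcases i with i | i <;> rcases j with j | j <;> fin_cases i <;> fin_cases j <;>
    simp [Pmat, Pinv, Matrix.mul_apply, Fintype.sum_sum_type, Fin.sum_univ_succ,
      Matrix.fromBlocks, Matrix.one_apply]

lemma cols_eq (A B : Matrix (Fin 2) (Fin 2) ℂ) :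
    Matrix.fromCols (XD A B) (XN A B) = Matrix.fromCols A B * Pmat := by
  ext i j
  rcases j with j | j <;> fin_cases i <;> fin_cases j <;>
    simp [Pmat, XD, XN, Matrix.mul_apply, Fintype.sum_sum_type, Fin.sum_univ_succ,
      Matrix.fromBlocks, Matrix.fromCols]

lemma diff_eq (A B : Matrix (Fin 2) (Fin 2) ℂ) :
    XD A B * (XN A B)ᴴ - XN A B * (XD A B)ᴴ
      = B * Jmat * Bᴴ - A * Jmat * Aᴴ := by
  ext i j
  fin_cases i <;> fin_cases j <;>
    simp [XD, XN, Jmat, Matrix.mul_apply, Matrix.vecMul, dotProduct,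
      Fin.sum_univ_succ, Matrix.conjTranspose_apply] <;> ring

/-- Lemma 2.5: `(A,B)` satisfies (*) iff `(X_D, X_N)` is admissible. -/
theorem condition_star_iff_admissible (A B : Matrix (Fin 2) (Fin 2) ℂ) :
    ((Matrix.fromCols A B).rank = 2 ∧ A * Jmat * Aᴴ = B * Jmat * Bᴴ) ↔
    ((Matrix.fromCols (XD A B) (XN A B)).rank = 2 ∧
      XD A B * (XN A B)ᴴ = XN A B * (XD A B)ᴴ) := by
  have hdet : IsUnit Pmat.det := Matrix.isUnit_det_of_right_inverse Pmat_mul_Pinv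
  have hrank : (Matrix.fromCols (XD A B) (XN A B)).rank = (Matrix.fromCols A B).rank := by
    rw [cols_eq, Matrix.rank_mul_eq_left_of_isUnit_det _ _ hdet]
  have heq : (A * Jmat * Aᴴ = B * Jmat * Bᴴ) ↔
      (XD A B * (XN A B)ᴴ = XN A B * (XD A B)ᴴ) := by
    rw [← sub_eq_zero, ← sub_eq_zero (a := XD A B * (XN A B)ᴴ), diff_eq, ← neg_sub,
      neg_eq_zero]
  exact ⟨fun ⟨h1, h2⟩ => ⟨hrank ▸ h1, heq.mp h2⟩, fun ⟨h1, h2⟩ => ⟨hrank ▸ h1, heq.mpr h2⟩⟩
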